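/- Let 0 ≤ a < 1, c < 0 and 0 ≤ b < −c·√(1 − a²). Then for every x ∈ ℝ with sin x ≠ a, the derivative of ω(x) = −(b + c·cos x)/(sin x − a) satisfies ω′(x) = (c − a·c·sin x + b·cos x)/(sin x − a)² < 0; in particular ω is strictly decreasing on every interval on which sin x ≠ a. -/

import Mathlib

open Real

/-- Monotonicity of the isocline `ω(x) = −(b + c·cos x)/(sin x − a)` of the Abel
equation when `0 ≤ a < 1`, `c < 0`, `0 ≤ b < −c·√(1 − a²)`: its derivative is
`(c − a·c·sin x + b·cos x)/(sin x − a)² < 0` wherever `sin x ≠ a`, and `ω` is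
strictly decreasing on every interval on which `sin x ≠ a`. -/
theorem isocline_strict_anti (a b c : ℝ) (ha0 : 0 ≤ a) (ha1 : a < 1) (hc : c < 0)
    (hb0 : 0 ≤ b) (hb : b < -c * Real.sqrt (1 - a ^ 2)) :
    (∀ x : ℝ, Real.sin x ≠ a →
        HasDerivAt (fun t => -(b + c * Real.cos t) / (Real.sin t - a))
          ((c - a * c * Real.sin x + b * Real.cos x) / (Real.sin x - a) ^ 2) x ∧
        (c - a * c * Real.sin x + b * Real.cos x) / (Real.sin x - a) ^ 2 < 0) ∧
    (∀ s : Set ℝ, s.OrdConnected → (∀ x ∈ s, Real.sin x ≠ a) →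
        StrictAntiOn (fun t => -(b + c * Real.cos t) / (Real.sin t - a)) s) := by
  set r := Real.sqrt (1 - a ^ 2) with hrdef
  have hr2 : r ^ 2 = 1 - a ^ 2 := Real.sq_sqrt (by nlinarith)
  have hrpos : 0 < r := Real.sqrt_pos.mpr (by nlinarith)
  have key : ∀ x : ℝ, Real.sin x ≠ a →
      HasDerivAt (fun t => -(b + c * Real.cos t) / (Real.sin t - a))
        ((c - a * c * Real.sin x + b * Real.cos x) / (Real.sin x - a) ^ 2) x ∧
      (c - a * c * Real.sin x + b * Real.cos x) / (Real.sin x - a) ^ 2 < 0 := by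
    intro x hx
    have hne : Real.sin x - a ≠ 0 := sub_ne_zero.mpr hx
    have hpy := Real.sin_sq_add_cos_sq x
    constructor
    · have h1 : HasDerivAt (fun t => -(b + c * Real.cos t)) (c * Real.sin x) x := by
        have := ((Real.hasDerivAt_cos x).const_mul c).const_add b
        have : HasDerivAt (fun t => -(b + c * Real.cos t)) (-(c * -Real.sin x)) x := this.neg
        convert this using 1
        ring
      have h2 : HasDerivAt (fun t => Real.sin t - a) (Real.cos x) x :=
        (Real.hasDerivAt_sin x).sub_const a
      have : HasDerivAt (fun t => -(b + c * Real.cos t) / (Real.sin t - a))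
          ((c * Real.sin x * (Real.sin x - a) - -(b + c * Real.cos x) * Real.cos x) / (Real.sin x - a) ^ 2) x :=
        h1.div h2 hne
      convert this using 2
      linear_combination (-c) * hpy
    · have hnum : c - a * c * Real.sin x + b * Real.cos x < 0 := by
        have hs1 : Real.sin x ≤ 1 := Real.sin_le_one x
        have h1as : 0 < 1 - a * Real.sin x := by
          nlinarith [Real.neg_one_le_sin x]
        have hcs : a * Real.sin x + r * Real.cos x ≤ 1 := by
          nlinarith [sq_nonneg (a * Real.cos x - r * Real.sin x)]
        rcases le_or_gt (Real.cos x) 0 with hco | hco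
        · nlinarith
        · nlinarith [mul_lt_mul_of_pos_right hb hco]
      have hden : 0 < (Real.sin x - a) ^ 2 := by positivity
      exact div_neg_of_neg_of_pos hnum hden
  refine ⟨key, fun s hs hsa => ?_⟩
  have hconv : Convex ℝ s := (convex_iff_ordConnected).mpr hs
  apply strictAntiOn_of_deriv_neg hconv
  · exact fun x hx => ((key x (hsa x hx)).1.continuousAt).continuousWithinAt
  · intro x hx
    have hxs := interior_subset hx
    have h := key x (hsa x hxs)
    rw [h.1.deriv]
    exact h.2
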